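/- Define g(p) = -log(-log(p)) + log(ε₁ - log(p + ε₂)) for p ∈ (0,1), where ε₁, ε₂ > 0 and e^{ε₁} > 1 + ε₂. Then g is strictly monotonically increasing on (0,1). Equivalently, the gap r(p) - r̃(p) between the GumbelMap r(p) = -log(-log(p)) and the Bounded GumbelMap r̃(p) = -log(ε₁ - log(p + ε₂)) increases monotonically in p. -/

import Mathlib

open Real

private lemma gap_key (ε₁ ε₂ : ℝ) (hε₁ : 0 < ε₁) (hε₂ : 0 < ε₂)
    (hadm : Real.exp ε₁ > 1 + ε₂) (x : ℝ) (hx0 : 0 < x) (hx1 : x < 1) :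
    x * (-Real.log x) < (x + ε₂) * (ε₁ - Real.log (x + ε₂)) := by
  set E := Real.exp ε₁ with hE
  have hE0 : 0 < E := Real.exp_pos ε₁
  have hEm1 : 0 < E - 1 := by linarith
  set t := ε₂ / (E - 1) with htdef
  have ht : 0 < t := div_pos hε₂ hEm1
  have htE : t * (E - 1) = ε₂ := div_mul_cancel₀ ε₂ hEm1.ne'
  have hlt1 : t < 1 := (div_lt_one hEm1).mpr (by linarith)
  set φ : ℝ → ℝ := fun y => ε₁ * (y + ε₂) - (y + ε₂) * Real.log (y + ε₂) + y * Real.log y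
    with hφ
  have hD : ∀ y : ℝ, 0 < y → HasDerivAt φ (ε₁ + Real.log y - Real.log (y + ε₂)) y := by
    intro y hy
    have hy2 : 0 < y + ε₂ := by linarith
    have h1 : HasDerivAt (fun p : ℝ => p + ε₂) 1 y := (hasDerivAt_id y).add_const ε₂
    have h2 : HasDerivAt (fun p : ℝ => Real.log (p + ε₂)) (1 / (y + ε₂)) y := by
      simpa using h1.log hy2.ne'
    have h3 : HasDerivAt (fun p : ℝ => Real.log p) (1 / y) y := by
      simpa [one_div] using Real.hasDerivAt_log hy.ne'
    have h4 : HasDerivAt φ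
        (ε₁ * 1 - (1 * Real.log (y + ε₂) + (y + ε₂) * (1 / (y + ε₂)))
          + (1 * Real.log y + y * (1 / y))) y :=
      ((h1.const_mul ε₁).sub (h1.mul h2)).add ((hasDerivAt_id y).mul h3)
    convert h4 using 1
    field_simp
    ring
  have hcont : ∀ s : Set ℝ, (∀ y ∈ s, 0 < y) → ContinuousOn φ s :=
    fun s hs y hy => ((hD y (hs y hy)).continuousAt).continuousWithinAt
  have hanti : StrictAntiOn φ (Set.Ioc 0 t) := by
    apply strictAntiOn_of_deriv_neg (convex_Ioc 0 t) (hcont _ (fun y hy => hy.1))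
    intro y hy
    rw [interior_Ioc] at hy
    obtain ⟨hy0, hyt⟩ := hy
    rw [(hD y hy0).deriv]
    have hyE : y * E < y + ε₂ := by nlinarith
    have hlog : Real.log (y * E) < Real.log (y + ε₂) :=
      Real.log_lt_log (by positivity) hyE
    rw [Real.log_mul hy0.ne' hE0.ne', hE, Real.log_exp] at hlog
    linarith
  have hmono : StrictMonoOn φ (Set.Ici t) := by
    apply strictMonoOn_of_deriv_pos (convex_Ici t) (hcont _ (fun y hy => lt_of_lt_of_le ht hy))
    intro y hy
    rw [interior_Ici] at hy
    have hty : t < y := hy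
    have hy0 : 0 < y := ht.trans hty
    rw [(hD y hy0).deriv]
    have hyE : y + ε₂ < y * E := by nlinarith [mul_lt_mul_of_pos_right hty hEm1]
    have hlog : Real.log (y + ε₂) < Real.log (y * E) :=
      Real.log_lt_log (by linarith) hyE
    rw [Real.log_mul hy0.ne' hE0.ne', hE, Real.log_exp] at hlog
    linarith
  have htsum : t + ε₂ = t * E := by nlinarith
  have hφt : 0 < φ t := by
    have hlogt : Real.log t < 0 := Real.log_neg ht hlt1
    have : φ t = -ε₂ * Real.log t := by
      show ε₁ * (t + ε₂) - (t + ε₂) * Real.log (t + ε₂) + t * Real.log t = -ε₂ * Real.log t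
      rw [htsum, Real.log_mul ht.ne' hE0.ne', hE, Real.log_exp]
      linear_combination (-Real.log t) * htE
    rw [this]
    nlinarith
  have hφx : 0 < φ x := by
    rcases lt_trichotomy x t with h | h | h
    · have := hanti ⟨hx0, h.le⟩ ⟨ht, le_refl t⟩ h
      linarith
    · rw [h]; exact hφt
    · have := hmono (Set.self_mem_Ici) (Set.mem_Ici.mpr h.le) h
      linarith
  have hφx' : 0 < ε₁ * (x + ε₂) - (x + ε₂) * Real.log (x + ε₂) + x * Real.log x := hφx
  nlinarith

theorem gap_strict_mono (ε₁ ε₂ : ℝ) (hε₁ : 0 < ε₁) (hε₂ : 0 < ε₂)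
    (hadm : Real.exp ε₁ > 1 + ε₂) :
    StrictMonoOn (fun p : ℝ => -Real.log (-Real.log p) + Real.log (ε₁ - Real.log (p + ε₂)))
      (Set.Ioo 0 1) := by
  have hder : ∀ x ∈ Set.Ioo (0:ℝ) 1,
      HasDerivAt (fun p : ℝ => -Real.log (-Real.log p) + Real.log (ε₁ - Real.log (p + ε₂)))
        (1 / (x * (-Real.log x)) - 1 / ((x + ε₂) * (ε₁ - Real.log (x + ε₂)))) x := by
    intro x hx
    obtain ⟨hx0, hx1⟩ := hx
    have hlogx : Real.log x < 0 := Real.log_neg hx0 hx1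
    have hx2 : 0 < x + ε₂ := by linarith
    have hlog2 : Real.log (x + ε₂) < ε₁ := by
      have h := Real.log_lt_log hx2 (show x + ε₂ < Real.exp ε₁ by linarith)
      rwa [Real.log_exp] at h
    have h1 : HasDerivAt (fun p : ℝ => -Real.log p) (-x⁻¹) x :=
      (Real.hasDerivAt_log hx0.ne').neg
    have h2 : HasDerivAt (fun p : ℝ => Real.log (-Real.log p)) (-x⁻¹ / (-Real.log x)) x :=
      h1.log (by linarith)
    have h3 : HasDerivAt (fun p : ℝ => p + ε₂) 1 x := (hasDerivAt_id x).add_const ε₂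
    have h4 : HasDerivAt (fun p : ℝ => ε₁ - Real.log (p + ε₂)) (-(1 / (x + ε₂))) x := by
      simpa using (h3.log hx2.ne').const_sub ε₁
    have h5 : HasDerivAt (fun p : ℝ => Real.log (ε₁ - Real.log (p + ε₂)))
        (-(1 / (x + ε₂)) / (ε₁ - Real.log (x + ε₂))) x := h4.log (by linarith)
    have h6 := h2.neg.add h5
    refine h6.congr_deriv ?_
    have hne1 : Real.log x ≠ 0 := hlogx.ne
    have hne2 : ε₁ - Real.log (x + ε₂) ≠ 0 := by linarith
    field_simp
    ring
  apply strictMonoOn_of_deriv_pos (convex_Ioo 0 1)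
  · exact fun x hx => ((hder x hx).continuousAt).continuousWithinAt
  · intro x hx
    rw [interior_Ioo] at hx
    rw [(hder x hx).deriv]
    obtain ⟨hx0, hx1⟩ := hx
    have hlogx : Real.log x < 0 := Real.log_neg hx0 hx1
    have hx2 : 0 < x + ε₂ := by linarith
    have hlog2 : Real.log (x + ε₂) < ε₁ := by
      have h := Real.log_lt_log hx2 (show x + ε₂ < Real.exp ε₁ by linarith)
      rwa [Real.log_exp] at h
    have hA : 0 < x * (-Real.log x) := by nlinarith
    have hAB := gap_key ε₁ ε₂ hε₁ hε₂ hadm x hx0 hx1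
    have h := one_div_lt_one_div_of_lt hA hAB
    linarith
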